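/- Let r > 0, let c ∈ ℝ², and let X be a finite set of points in ℝ² such that dist(c,x) = 2r for every x ∈ X and dist(x,x') ≥ 2r for all distinct x, x' ∈ X. Then |X| ≤ 6. -/

import Mathlib

private noncomputable def toC (v : EuclideanSpace ℝ (Fin 2)) : ℂ := ⟨v 0, v 1⟩

private lemma toC_dist (x y : EuclideanSpace ℝ (Fin 2)) : dist (toC x) (toC y) = dist x y := by
  rw [Complex.dist_eq_re_im, EuclideanSpace.dist_eq]
  simp [toC, Fin.sum_univ_two, Real.dist_eq, sq_abs]

private lemma chord_sq (R a b : ℝ) :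
    ‖(R * Complex.exp (a * Complex.I) - R * Complex.exp (b * Complex.I) : ℂ)‖ ^ 2
      = R ^ 2 * (2 - 2 * Real.cos (a - b)) := by
  rw [Complex.sq_norm]
  simp [Complex.normSq_apply, Complex.exp_mul_I, Real.cos_sub,
    Complex.cos_ofReal_re, Complex.sin_ofReal_re]
  linear_combination (R^2) * Real.sin_sq_add_cos_sq a + (R^2) * Real.sin_sq_add_cos_sq b

private lemma chord_lt (R : ℝ) (hR : 0 < R) (z w : ℂ) (hz : ‖z‖ = R)
    (hw : ‖w‖ = R) (h : |z.arg - w.arg| < Real.pi / 3) :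
    ‖z - w‖ < R := by
  have hz' := Complex.norm_mul_exp_arg_mul_I z
  have hw' := Complex.norm_mul_exp_arg_mul_I w
  rw [hz] at hz'; rw [hw] at hw'
  have hcos : (1:ℝ)/2 < Real.cos (z.arg - w.arg) := by
    rcases eq_or_lt_of_le (abs_nonneg (z.arg - w.arg)) with h0 | h0
    · have he : z.arg - w.arg = 0 := abs_eq_zero.mp h0.symm
      rw [he, Real.cos_zero]; norm_num
    · have := Real.cos_lt_cos_of_nonneg_of_le_pi (le_of_lt h0)
        (by linarith [Real.pi_pos]) h
      rw [Real.cos_abs, Real.cos_pi_div_three] at this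
      linarith
  have hsq : ‖z - w‖ ^ 2 = R ^ 2 * (2 - 2 * Real.cos (z.arg - w.arg)) := by
    conv_lhs => rw [← hz', ← hw']
    exact chord_sq R z.arg w.arg
  have h1 : ‖z - w‖ ^ 2 < R ^ 2 := by
    rw [hsq]; nlinarith [pow_pos hR 2]
  exact lt_of_pow_lt_pow_left₀ 2 hR.le h1

/-- If every point of a finite set `X` in the Euclidean plane is at distance exactly `2r`
from `c`, and the points of `X` are pairwise at distance `≥ 2r` (with `r > 0`), then
`|X| ≤ 6`. -/
theorem card_le_six_of_touching_and_separated (r : ℝ) (hr : 0 < r)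
    (c : EuclideanSpace ℝ (Fin 2)) (X : Finset (EuclideanSpace ℝ (Fin 2)))
    (htouch : ∀ x ∈ X, dist c x = 2 * r)
    (hsep : ∀ x ∈ X, ∀ y ∈ X, x ≠ y → 2 * r ≤ dist x y) :
    X.card ≤ 6 := by
  by_contra hcard
  push_neg at hcard
  have hπ := Real.pi_pos
  set A : EuclideanSpace ℝ (Fin 2) → ℝ := fun x => (toC x - toC c).arg with hA
  set g : EuclideanSpace ℝ (Fin 2) → ℤ := fun x => ⌈(A x + Real.pi) * 3 / Real.pi⌉ with hg
  have habs : ∀ x ∈ X, ‖toC x - toC c‖ = 2 * r := by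
    intro x hx
    rw [← Complex.dist_eq, toC_dist, dist_comm]
    exact htouch x hx
  have hmaps : ∀ x ∈ X, g x ∈ Finset.Icc (1 : ℤ) 6 := by
    intro x hx
    have h1 := Complex.neg_pi_lt_arg (toC x - toC c)
    have h2 := Complex.arg_le_pi (toC x - toC c)
    simp only [hg]
    rw [Finset.mem_Icc]
    constructor
    · have : (0:ℝ) < (A x + Real.pi) * 3 / Real.pi := by
        apply div_pos _ hπ
        have : 0 < A x + Real.pi := by simp only [hA]; linarith
        linarith
      have := Int.lt_ceil.mpr (by exact_mod_cast this : ((0:ℤ):ℝ) < _)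
      omega
    · apply Int.ceil_le.mpr
      rw [div_le_iff₀ hπ]
      have : A x ≤ Real.pi := h2
      push_cast
      linarith
  have hlt : (Finset.Icc (1 : ℤ) 6).card < X.card := by
    simp only [Int.card_Icc]
    omega
  obtain ⟨x, hx, y, hy, hxy, hgxy⟩ :=
    Finset.exists_ne_map_eq_of_card_lt_of_maps_to hlt hmaps
  -- from g x = g y deduce |A x - A y| < π/3
  have key : |A x - A y| < Real.pi / 3 := by
    have l1 : (A x + Real.pi) * 3 / Real.pi ≤ (⌈(A x + Real.pi) * 3 / Real.pi⌉ : ℝ) :=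
      Int.le_ceil _
    have l2 : (A y + Real.pi) * 3 / Real.pi ≤ (⌈(A y + Real.pi) * 3 / Real.pi⌉ : ℝ) :=
      Int.le_ceil _
    have l3 : (⌈(A x + Real.pi) * 3 / Real.pi⌉ : ℝ) < (A x + Real.pi) * 3 / Real.pi + 1 :=
      Int.ceil_lt_add_one _
    have l4 : (⌈(A y + Real.pi) * 3 / Real.pi⌉ : ℝ) < (A y + Real.pi) * 3 / Real.pi + 1 :=
      Int.ceil_lt_add_one _
    simp only [hg] at hgxy
    have heqc : (⌈(A x + Real.pi) * 3 / Real.pi⌉ : ℝ) = (⌈(A y + Real.pi) * 3 / Real.pi⌉ : ℝ) := by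
      exact_mod_cast hgxy
    have d1 : (A x + Real.pi) * 3 / Real.pi - (A y + Real.pi) * 3 / Real.pi < 1 := by linarith
    have d2 : (A y + Real.pi) * 3 / Real.pi - (A x + Real.pi) * 3 / Real.pi < 1 := by linarith
    have e1 : (A x - A y) * 3 / Real.pi < 1 := by
      have : (A x + Real.pi) * 3 / Real.pi - (A y + Real.pi) * 3 / Real.pi
          = (A x - A y) * 3 / Real.pi := by ring
      linarith [this ▸ d1]
    have e2 : (A y - A x) * 3 / Real.pi < 1 := by
      have : (A y + Real.pi) * 3 / Real.pi - (A x + Real.pi) * 3 / Real.pi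
          = (A y - A x) * 3 / Real.pi := by ring
      linarith [this ▸ d2]
    rw [div_lt_one hπ] at e1 e2
    rw [abs_lt]
    constructor <;> linarith
  have hchord := chord_lt (2 * r) (by linarith) _ _ (habs x hx) (habs y hy) key
  have : dist x y < 2 * r := by
    have : toC x - toC c - (toC y - toC c) = toC x - toC y := by ring
    rw [this] at hchord
    rw [← toC_dist, Complex.dist_eq]
    exact hchord
  linarith [hsep x hx y hy hxy]
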